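/- Let λ > 0 and let r, t : ℝ → ℝ be functions differentiable at a point s, with cosh(r(σ)) · cosh(t(σ)) = cosh(λ) for all σ in a neighborhood of s, and suppose cosh(r(s)) < cosh(λ) and t(s) > 0. Then r'(s)² + cosh²(r(s)) · t'(s)² = r'(s)² · cosh²(r(s)) · sinh²(λ) / (cosh²(λ) − cosh²(r(s))). -/
import Mathlib


open Real

/-- Along the constraint `cosh r · cosh t = cosh λ` (with `cosh r < cosh λ` and `t > 0`),
one has `r'² + cosh²(r) t'² = r'² cosh²(r) sinh²(λ) / (cosh²λ − cosh²r)`. -/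
theorem stmt_6 (lam : ℝ) (hlam : 0 < lam) (r t : ℝ → ℝ) (s : ℝ)
    (hr : DifferentiableAt ℝ r s) (ht : DifferentiableAt ℝ t s)
    (hconstr : ∀ᶠ σ in nhds s, Real.cosh (r σ) * Real.cosh (t σ) = Real.cosh lam)
    (hrs : Real.cosh (r s) < Real.cosh lam) (hts : 0 < t s) :
    deriv r s ^ 2 + Real.cosh (r s) ^ 2 * deriv t s ^ 2 =
      deriv r s ^ 2 * Real.cosh (r s) ^ 2 * Real.sinh lam ^ 2 /
        (Real.cosh lam ^ 2 - Real.cosh (r s) ^ 2) := by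
  set r' := deriv r s with hr'
  set t' := deriv t s with ht'
  set A := Real.cosh (r s) with hA
  set B := Real.cosh (t s) with hB
  set L := Real.cosh lam with hL
  set sa := Real.sinh (r s) with hsa
  set sb := Real.sinh (t s) with hsb
  set sl := Real.sinh lam with hsl
  have h1 : A * B = L := hconstr.self_of_nhds
  have h3 : A ^ 2 = sa ^ 2 + 1 := Real.cosh_sq (r s)
  have h4 : B ^ 2 = sb ^ 2 + 1 := Real.cosh_sq (t s)
  have h5 : L ^ 2 = sl ^ 2 + 1 := Real.cosh_sq lam
  -- derivative of the constraint is zero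
  have hd : HasDerivAt (fun σ => Real.cosh (r σ) * Real.cosh (t σ))
      (sa * r' * B + A * (sb * t')) s := by
    have hdr : HasDerivAt (fun σ => Real.cosh (r σ)) (sa * r') s :=
      (Real.hasDerivAt_cosh (r s)).comp s hr.hasDerivAt
    have hdt : HasDerivAt (fun σ => Real.cosh (t σ)) (sb * t') s :=
      (Real.hasDerivAt_cosh (t s)).comp s ht.hasDerivAt
    exact hdr.mul hdt
  have h0 : HasDerivAt (fun σ => Real.cosh (r σ) * Real.cosh (t σ)) 0 s :=
    (hasDerivAt_const s L).congr_of_eventuallyEq hconstr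
  have key : sa * r' * B + A * (sb * t') = 0 := hd.unique h0
  have hkey : A * (sb * t') = -(sa * r' * B) := by linarith
  have hsq : A ^ 2 * sb ^ 2 * t' ^ 2 = sa ^ 2 * r' ^ 2 * B ^ 2 := by
    linear_combination (A * sb * t' - sa * r' * B) * hkey
  have hApos : 0 < A := Real.cosh_pos (r s)
  have hD : 0 < L ^ 2 - A ^ 2 := by nlinarith [Real.cosh_pos lam]
  rw [eq_div_iff hD.ne']
  linear_combination (r' ^ 2 * A ^ 2) * h5 + A ^ 2 * hsq + t' ^ 2 * A ^ 4 * h4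
    - r' ^ 2 * B ^ 2 * A ^ 2 * h3
    - (t' ^ 2 * A ^ 2 + r' ^ 2 * (1 - A ^ 2)) * (L + A * B) * h1
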